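/- Let $(G, \omega)$ be an infinite connected weighted graph with positive edge weights such that there is $C > 0$ with $\sum_{j \sim i} \omega_{ij} \leq C$ for every vertex $i$. Then for any pair of mutually disjoint nonempty vertex sets $V_1, V_2$, the vertex extremal length and the resistance satisfy $\operatorname{VEL}(V_1, V_2) \leq 2C \cdot \operatorname{RES}(V_1, V_2)$. -/

import Mathlib

open scoped ENNReal

/-- The vertex modulus of the family of paths joining `V₁` and `V₂` in `G`. -/
noncomputable def MODv {V : Type*} [DecidableEq V] (G : SimpleGraph V) (V₁ V₂ : Set V) :
    ℝ≥0∞ :=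
  ⨅ (ν : V → ℝ≥0∞) (_ : ∀ (u w : V) (q : G.Walk u w), u ∈ V₁ → w ∈ V₂ →
      1 ≤ ∑ x ∈ q.support.toFinset, ν x), ∑' x, ν x ^ 2

/-- The vertex extremal length between `V₁` and `V₂` in `G`. -/
noncomputable def VEL {V : Type*} [DecidableEq V] (G : SimpleGraph V) (V₁ V₂ : Set V) :
    ℝ≥0∞ :=
  (MODv G V₁ V₂)⁻¹

/-- The conductance between `V₁` and `V₂` in the weighted graph `(G, ω)`. -/
noncomputable def COND {V : Type*} [DecidableEq V] (G : SimpleGraph V) (ω : Sym2 V → ℝ≥0∞)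
    (V₁ V₂ : Set V) : ℝ≥0∞ :=
  ⨅ (η : Sym2 V → ℝ≥0∞) (_ : ∀ (u w : V) (q : G.Walk u w), u ∈ V₁ → w ∈ V₂ →
      1 ≤ ∑ e ∈ q.edges.toFinset, η e), ∑' e : G.edgeSet, ω e * η (e : Sym2 V) ^ 2

/-- The resistance between `V₁` and `V₂` in the weighted graph `(G, ω)`. -/
noncomputable def RES {V : Type*} [DecidableEq V] (G : SimpleGraph V) (ω : Sym2 V → ℝ≥0∞)
    (V₁ V₂ : Set V) : ℝ≥0∞ :=
  (COND G ω V₁ V₂)⁻¹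

/-- AM-GM for `ℝ≥0∞`. -/
lemma aux_two_mul_le_add_sq (a b : ℝ≥0∞) : 2 * a * b ≤ a ^ 2 + b ^ 2 := by
  rcases eq_or_ne a 0 with rfl | ha0
  · simp
  rcases eq_or_ne b 0 with rfl | hb0
  · simp
  rcases eq_or_ne a ⊤ with rfl | hat
  · rw [pow_two, ENNReal.top_mul_top]
    exact le_trans le_top (le_add_right le_rfl)
  rcases eq_or_ne b ⊤ with rfl | hbt
  · rw [pow_two (⊤ : ℝ≥0∞), ENNReal.top_mul_top]
    exact le_trans le_top (le_add_left le_rfl)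
  lift a to NNReal using hat
  lift b to NNReal using hbt
  have h := two_mul_le_add_sq a b
  exact_mod_cast h

/-- Every vertex on a walk either equals the start or lies on some edge of the walk. -/
lemma aux_start_or_edge {V : Type*} {G : SimpleGraph V} :
    ∀ {u w : V} (p : G.Walk u w) (v : V), v ∈ p.support → v = u ∨ ∃ e ∈ p.edges, v ∈ e := by
  intro u w p
  induction p with
  | nil => intro v hv; left; simpa using hv
  | @cons u b w h p ih =>
    intro v hv
    rw [SimpleGraph.Walk.support_cons, List.mem_cons] at hv
    rcases hv with rfl | hv
    · left; rfl
    · rcases ih v hv with rfl | ⟨e, he, hve⟩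
      · right; exact ⟨s(u, v), by simp, by simp⟩
      · right; exact ⟨e, by simp [he], hve⟩

/-- Every vertex on a nontrivial walk lies on some edge of the walk. -/
lemma aux_mem_edge {V : Type*} {G : SimpleGraph V} {u w : V} (q : G.Walk u w)
    (hq : ¬ q.Nil) (v : V) (hv : v ∈ q.support) : ∃ e ∈ q.edges, v ∈ e := by
  rcases aux_start_or_edge q v hv with rfl | h
  · rcases SimpleGraph.Walk.not_nil_iff.mp hq with ⟨b, hadj, p, rfl⟩
    exact ⟨s(v, b), by simp, by simp⟩
  · exact h

/-- The support sum is bounded by the edge sum for the induced edge metric. -/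
lemma aux_support_sum_le {V : Type*} [DecidableEq V] {G : SimpleGraph V} (ν : V → ℝ≥0∞)
    {u w : V} (q : G.Walk u w) (hq : ¬ q.Nil) :
    ∑ x ∈ q.support.toFinset, ν x ≤
      ∑ e ∈ q.edges.toFinset,
        Sym2.lift ⟨fun a b => ν a + ν b, fun a b => add_comm _ _⟩ e := by
  classical
  have hex : ∀ v : V, ∃ e : Sym2 V,
      v ∈ q.support.toFinset → e ∈ q.edges.toFinset ∧ v ∈ e := by
    intro v
    by_cases hv : v ∈ q.support.toFinset
    · obtain ⟨e, he, hve⟩ := aux_mem_edge q hq v (List.mem_toFinset.mp hv)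
      exact ⟨e, fun _ => ⟨List.mem_toFinset.mpr he, hve⟩⟩
    · exact ⟨s(u, u), fun h => absurd h hv⟩
  choose c hc using hex
  have hmaps : ∀ v ∈ q.support.toFinset, c v ∈ q.edges.toFinset :=
    fun v hv => (hc v hv).1
  rw [← Finset.sum_fiberwise_of_maps_to hmaps]
  refine Finset.sum_le_sum ?_
  intro e he
  revert he
  induction e using Sym2.ind with
  | _ a b =>
    intro he
    have hadj : G.Adj a b := q.adj_of_mem_edges (List.mem_toFinset.mp he)
    have hab : a ≠ b := hadj.ne
    have hsub : q.support.toFinset.filter (fun v => c v = s(a, b)) ⊆ {a, b} := by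
      intro v hv
      rw [Finset.mem_filter] at hv
      have hvc : v ∈ c v := (hc v hv.1).2
      rw [hv.2, Sym2.mem_iff] at hvc
      simpa [Finset.mem_insert, Finset.mem_singleton] using hvc
    calc ∑ v ∈ q.support.toFinset.filter (fun v => c v = s(a, b)), ν v
        ≤ ∑ v ∈ ({a, b} : Finset V), ν v := Finset.sum_le_sum_of_subset hsub
      _ = ν a + ν b := Finset.sum_pair hab
      _ = Sym2.lift ⟨fun a b => ν a + ν b, fun a b => add_comm _ _⟩ s(a, b) := by
          rw [Sym2.lift_mk]

/-- The area of the induced edge metric is bounded by `2C` times the vertex area. -/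
lemma aux_area_le {V : Type*} [DecidableEq V] (G : SimpleGraph V) (ω : Sym2 V → ℝ≥0∞)
    (C : ℝ≥0∞) (hrow : ∀ i : V, ∑' j : {j : V // G.Adj i j}, ω s(i, (j : V)) ≤ C)
    (ν : V → ℝ≥0∞) :
    ∑' e : G.edgeSet,
        ω e * (Sym2.lift ⟨fun a b => ν a + ν b, fun a b => add_comm _ _⟩ (e : Sym2 V)) ^ 2
      ≤ 2 * C * ∑' x, ν x ^ 2 := by
  classical
  set η := Sym2.lift ⟨fun a b => ν a + ν b, fun a b => add_comm _ _⟩ with hη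
  set D := (v : V) × {j : V // G.Adj v j} with hD
  set g : D → ℝ≥0∞ := fun d => ω s(d.1, (d.2 : V)) * ν d.1 ^ 2 with hg
  set f : D → G.edgeSet := fun d => ⟨s(d.1, (d.2 : V)), d.2.2⟩ with hf
  have hpt : ∀ e : G.edgeSet, ω e * η (e : Sym2 V) ^ 2 ≤ 2 * ∑' d : f ⁻¹' {e}, g d := by
    rintro ⟨e, he⟩
    revert he
    induction e using Sym2.ind with
    | _ a b =>
      intro he
      have hadj : G.Adj a b := he
      have hab : a ≠ b := hadj.ne
      set d₁ : D := ⟨a, ⟨b, hadj⟩⟩ with hd₁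
      set d₂ : D := ⟨b, ⟨a, hadj.symm⟩⟩ with hd₂
      have hd12 : d₁ ≠ d₂ := fun h => hab (congrArg Sigma.fst h)
      have hfib : f ⁻¹' {(⟨s(a, b), he⟩ : G.edgeSet)} = (({d₁, d₂} : Finset D) : Set D) := by
        refine Set.Subset.antisymm ?_ ?_
        · rintro ⟨v, j, hj⟩ h
          simp only [Set.mem_preimage, Set.mem_singleton_iff] at h
          have hval : s(v, j) = s(a, b) := congrArg Subtype.val h
          rw [Sym2.eq_iff] at hval
          rcases hval with ⟨rfl, rfl⟩ | ⟨rfl, rfl⟩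
          · exact Finset.mem_coe.mpr (Finset.mem_insert_self _ _)
          · exact Finset.mem_coe.mpr (Finset.mem_insert_of_mem (Finset.mem_singleton_self _))
        · intro d h
          simp only [Finset.coe_insert, Finset.coe_singleton, Set.mem_insert_iff,
            Set.mem_singleton_iff] at h
          simp only [Set.mem_preimage, Set.mem_singleton_iff]
          rcases h with rfl | rfl
          · exact Subtype.ext rfl
          · exact Subtype.ext Sym2.eq_swap
      calc ω s(a, b) * η s(a, b) ^ 2
          = ω s(a, b) * (ν a + ν b) ^ 2 := by rw [hη, Sym2.lift_mk]
        _ ≤ ω s(a, b) * (2 * (ν a ^ 2 + ν b ^ 2)) := by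
            refine mul_le_mul' le_rfl ?_
            rw [add_sq]
            calc ν a ^ 2 + 2 * ν a * ν b + ν b ^ 2
                ≤ ν a ^ 2 + (ν a ^ 2 + ν b ^ 2) + ν b ^ 2 := by
                  gcongr
                  exact aux_two_mul_le_add_sq _ _
              _ = 2 * (ν a ^ 2 + ν b ^ 2) := by ring
        _ = 2 * (ω s(a, b) * ν a ^ 2 + ω s(b, a) * ν b ^ 2) := by
            rw [Sym2.eq_swap]; ring
        _ = 2 * ∑' d : f ⁻¹' {(⟨s(a, b), he⟩ : G.edgeSet)}, g d := by
            rw [hfib, Finset.tsum_subtype' ({d₁, d₂} : Finset D) g, Finset.sum_pair hd12]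
  calc ∑' e : G.edgeSet, ω e * η (e : Sym2 V) ^ 2
      ≤ ∑' e : G.edgeSet, 2 * ∑' d : f ⁻¹' {e}, g d := ENNReal.tsum_le_tsum hpt
    _ = 2 * ∑' e : G.edgeSet, ∑' d : f ⁻¹' {e}, g d := ENNReal.tsum_mul_left
    _ = 2 * ∑' d : D, g d := by rw [ENNReal.tsum_fiberwise g f]
    _ = 2 * ∑' v : V, ∑' j : {j : V // G.Adj v j}, g ⟨v, j⟩ := by
        rw [ENNReal.tsum_sigma' g]
    _ = 2 * ∑' v : V, ν v ^ 2 * ∑' j : {j : V // G.Adj v j}, ω s(v, (j : V)) := by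
        congr 1
        refine tsum_congr fun v => ?_
        simp only [hg]
        rw [ENNReal.tsum_mul_right, mul_comm]
    _ ≤ 2 * ∑' v : V, ν v ^ 2 * C := by
        refine mul_le_mul' le_rfl (ENNReal.tsum_le_tsum fun v => ?_)
        exact mul_le_mul' le_rfl (hrow v)
    _ = 2 * C * ∑' x, ν x ^ 2 := by
        rw [ENNReal.tsum_mul_right]; ring

/-- He's Lemma 5.4: if the weighted vertex degrees are uniformly bounded by `C`, then
`VEL(V₁, V₂) ≤ 2C · RES(V₁, V₂)`. -/
theorem stmt_19 {V : Type*} [DecidableEq V] [Infinite V] (G : SimpleGraph V)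
    (hG : G.Connected) (ω : Sym2 V → ℝ≥0∞) (hpos : ∀ e ∈ G.edgeSet, 0 < ω e)
    (C : ℝ≥0∞) (hC : 0 < C) (hC' : C ≠ ⊤)
    (hrow : ∀ i : V, ∑' j : {j : V // G.Adj i j}, ω s(i, (j : V)) ≤ C)
    (V₁ V₂ : Set V) (h₁ : V₁.Nonempty) (h₂ : V₂.Nonempty) (hd : Disjoint V₁ V₂) :
    VEL G V₁ V₂ ≤ 2 * C * RES G ω V₁ V₂ := by
  classical
  have h2C0 : (2 * C) ≠ 0 := mul_ne_zero (by norm_num) hC.ne'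
  have h2Ct : (2 * C) ≠ ⊤ := ENNReal.mul_ne_top (by norm_num) hC'
  have key : COND G ω V₁ V₂ ≤ 2 * C * MODv G V₁ V₂ := by
    unfold MODv
    rw [mul_comm (2 * C), ← ENNReal.div_le_iff_le_mul (Or.inl h2C0) (Or.inl h2Ct)]
    refine le_iInf fun ν => le_iInf fun hν => ?_
    rw [ENNReal.div_le_iff_le_mul (Or.inl h2C0) (Or.inl h2Ct), mul_comm]
    refine le_trans ?_ (aux_area_le G ω C hrow ν)
    refine le_trans (iInf_le _ (Sym2.lift ⟨fun a b => ν a + ν b, fun a b => add_comm _ _⟩))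
      (iInf_le _ ?_)
    intro u w q hu hw
    have hne : u ≠ w := fun h => Set.disjoint_left.mp hd hu (h ▸ hw)
    have hq : ¬ q.Nil := SimpleGraph.Walk.not_nil_of_ne hne
    exact (hν u w q hu hw).trans (aux_support_sum_le ν q hq)
  have hdivle : COND G ω V₁ V₂ / (2 * C) ≤ MODv G V₁ V₂ := by
    rw [ENNReal.div_le_iff_le_mul (Or.inl h2C0) (Or.inl h2Ct), mul_comm]
    exact key
  rw [VEL, RES]
  calc (MODv G V₁ V₂)⁻¹ ≤ (COND G ω V₁ V₂ / (2 * C))⁻¹ := ENNReal.inv_le_inv.mpr hdivle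
    _ = (2 * C) / COND G ω V₁ V₂ := ENNReal.inv_div (Or.inl h2Ct) (Or.inl h2C0)
    _ = 2 * C * (COND G ω V₁ V₂)⁻¹ := by rw [div_eq_mul_inv]
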